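/- Suppose ‖·‖ = ‖·‖₂ is the Euclidean norm on ℝ^d. Then for any d_* > 0, any a < d_* and any D̄ > 0, κ(a,d_*,D̄) ≤ sqrt( max{ 1 − (d_* − a)²/(4·D̄²), (d_* + a)/(2·d_*) } ). In particular, for any w,z ∈ ℝ^d with ‖w‖₂ = 1, w^⊤z ≥ γ for some γ > 0, and ‖z‖₂ ≤ δ, one has min_{β∈[0,1]} ‖w − βz‖₂ ≤ sqrt( max{ 1 − (γ/δ)², 1 − γ } ). -/

import Mathlib

noncomputable section
open scoped Classical
open scoped RealInnerProductSpace

/-- Feature space: `ℝ^d` with the Euclidean (`ℓ₂`) norm as ambient norm. -/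
abbrev E (d : ℕ) : Type := EuclideanSpace ℝ (Fin d)

/-- Sign function with the convention `sgn 0 = +1`. -/
def sgn (t : ℝ) : ℝ := if 0 ≤ t then 1 else -1

/-- Dual norm `‖y‖_* = max { ⟪y,x⟫ : ‖x‖ ≤ 1 }` of a (semi)norm `p`. -/
def dualNorm {d : ℕ} (p : Seminorm ℝ (E d)) (y : E d) : ℝ :=
  sSup ((fun x => ⟪y, x⟫) '' {x | p x ≤ 1})

/-- Predicted label `p̂(x,y,b) = sgn(⟪y,x⟫ + b - 2‖y‖_*/c)`. -/
def pred {d : ℕ} (p : Seminorm ℝ (E d)) (c : ℝ) (x y : E d) (b : ℝ) : ℝ :=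
  sgn (⟪y, x⟫ + b - 2 * dualNorm p y / c)

/-- Agent response `r(A,y,b)`. -/
def resp {d : ℕ} (p : Seminorm ℝ (E d)) (v : E d → E d) (c : ℝ)
    (A y : E d) (b : ℝ) : E d :=
  if y ≠ 0 ∧ 0 ≤ (⟪y, A⟫ + b) / dualNorm p y ∧ (⟪y, A⟫ + b) / dualNorm p y < 2 / c
  then A + (2 / c - (⟪y, A⟫ + b) / dualNorm p y) • v y
  else A

/-- Proxy point `s(A,y,b)`. -/
def proxy {d : ℕ} (p : Seminorm ℝ (E d)) (v : E d → E d) (lbl : E d → ℝ) (c : ℝ)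
    (A y : E d) (b : ℝ) : E d :=
  if y ≠ 0 ∧ 0 ≤ (⟪y, A⟫ + b) / dualNorm p y ∧ (⟪y, A⟫ + b) / dualNorm p y < 2 / c
      ∧ lbl A = -1
  then A - ((⟪y, A⟫ + b) / dualNorm p y) • v y
  else resp p v c A y b

/-- The contraction factor `κ(a,d_*,D̄)` for the Euclidean norm, where the gradient
of the norm at a unit vector `w` is `w` itself. -/
def kappaL2 (d : ℕ) (a dstar Dbar : ℝ) : ℝ :=
  sSup {t : ℝ | ∃ w z : E d, ‖w‖ = 1 ∧
    (1 - a / dstar) / 2 ≤ ⟪w, z⟫ ∧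
    ‖z‖ ≤ Dbar / dstar ∧
    t = sInf ((fun β : ℝ => ‖w - β • z‖) '' Set.Icc (0 : ℝ) 1)}

/-- Lemma `kappa-L2`: bound on `κ(a,d_*,D̄)` for `ℓ₂`-norm costs,
together with the underlying pointwise bound on `min_{β∈[0,1]} ‖w - βz‖₂`. -/
theorem kappaL2_key {d : ℕ} (w z : E d) (γ δ : ℝ) (hw : ‖w‖ = 1) (hγ : 0 < γ)
    (hwz : γ ≤ ⟪w, z⟫) (hz : ‖z‖ ≤ δ) :
    sInf ((fun β : ℝ => ‖w - β • z‖) '' Set.Icc (0 : ℝ) 1) ≤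
      Real.sqrt (max (1 - (γ / δ) ^ 2) (1 - γ)) := by
  have hip : ⟪w, z⟫ ≤ ‖z‖ := by
    calc ⟪w, z⟫ ≤ ‖w‖ * ‖z‖ := real_inner_le_norm w z
    _ = ‖z‖ := by rw [hw, one_mul]
  have hzγ : γ ≤ ‖z‖ := hwz.trans hip
  have hz0 : 0 < ‖z‖ := hγ.trans_le hzγ
  have hδ : 0 < δ := hz0.trans_le hz
  have bdd : BddBelow ((fun β : ℝ => ‖w - β • z‖) '' Set.Icc (0 : ℝ) 1) := by
    refine ⟨0, ?_⟩
    rintro x ⟨β, hβ, rfl⟩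
    exact norm_nonneg _
  have sqeq : ∀ β : ℝ, ‖w - β • z‖ ^ 2 = 1 - 2 * β * ⟪w, z⟫ + β ^ 2 * ‖z‖ ^ 2 := by
    intro β
    have h := norm_sub_sq_real w (β • z)
    rw [real_inner_smul_right, norm_smul] at h
    have h2 : (‖β • z‖ : ℝ) ^ 2 = β ^ 2 * ‖z‖ ^ 2 := by
      rw [norm_smul]; simp [mul_pow, sq_abs]
    rw [norm_smul] at h2
    rw [h, hw, h2]; ring
  have normle : ∀ (β t : ℝ), ‖w - β • z‖ ^ 2 ≤ t → ‖w - β • z‖ ≤ Real.sqrt t := by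
    intro β t h
    rw [← Real.sqrt_sq (norm_nonneg (w - β • z))]
    exact Real.sqrt_le_sqrt h
  by_cases hc : γ ≤ ‖z‖ ^ 2
  · set β : ℝ := γ / ‖z‖ ^ 2 with hβdef
    have hZ : (0:ℝ) < ‖z‖ ^ 2 := by positivity
    have hβ0 : 0 ≤ β := by positivity
    have hβ1 : β ≤ 1 := div_le_one_of_le₀ hc hZ.le
    refine (csInf_le bdd ⟨β, ⟨hβ0, hβ1⟩, rfl⟩).trans
      ((normle β _ ?_).trans (Real.sqrt_le_sqrt (le_max_left _ _)))
    rw [sqeq]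
    have e1 : β ^ 2 * ‖z‖ ^ 2 = γ ^ 2 / ‖z‖ ^ 2 := by
      rw [hβdef]; field_simp
    have e2 : β * γ = γ ^ 2 / ‖z‖ ^ 2 := by
      rw [hβdef]; field_simp
    have e3 : β * γ ≤ β * ⟪w, z⟫ := mul_le_mul_of_nonneg_left hwz hβ0
    have hδ2 : ‖z‖ ^ 2 ≤ δ ^ 2 := by nlinarith
    have e4 : γ ^ 2 / δ ^ 2 ≤ γ ^ 2 / ‖z‖ ^ 2 :=
      div_le_div_of_nonneg_left (by positivity) hZ hδ2
    have e5 : (γ / δ) ^ 2 = γ ^ 2 / δ ^ 2 := div_pow γ δ 2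
    linarith
  · push_neg at hc
    refine (csInf_le bdd ⟨1, ⟨zero_le_one, le_refl 1⟩, rfl⟩).trans
      ((normle 1 _ ?_).trans (Real.sqrt_le_sqrt (le_max_right _ _)))
    rw [sqeq]
    nlinarith

theorem kappaL2_bound
    {d : ℕ} (hd : 1 ≤ d)
    (a dstar Dbar : ℝ) (hdstar : 0 < dstar) (ha : a < dstar) (hDbar : 0 < Dbar) :
    kappaL2 d a dstar Dbar ≤
      Real.sqrt (max (1 - (dstar - a) ^ 2 / (4 * Dbar ^ 2)) ((dstar + a) / (2 * dstar))) ∧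
    ∀ (w z : E d) (γ δ : ℝ), ‖w‖ = 1 → 0 < γ → γ ≤ ⟪w, z⟫ → ‖z‖ ≤ δ →
      sInf ((fun β : ℝ => ‖w - β • z‖) '' Set.Icc (0 : ℝ) 1) ≤
        Real.sqrt (max (1 - (γ / δ) ^ 2) (1 - γ)) := by
  constructor
  · apply Real.sSup_le
    · rintro t ⟨w, z, hw, hwz, hz, rfl⟩
      set γ : ℝ := (dstar - a) / (2 * dstar) with hγdef
      set δ : ℝ := Dbar / dstar with hδdef
      have hγpos : 0 < γ := div_pos (by linarith) (by linarith)
      have hwz' : γ ≤ ⟪w, z⟫ := by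
        have : γ = (1 - a / dstar) / 2 := by
          have h1 : dstar ≠ 0 := hdstar.ne'
          rw [hγdef, div_eq_div_iff (by positivity) (by positivity)]
          field_simp
        rw [this]; exact hwz
      have h := kappaL2_key w z γ δ hw hγpos hwz' hz
      have heq : max (1 - (γ / δ) ^ 2) (1 - γ) =
          max (1 - (dstar - a) ^ 2 / (4 * Dbar ^ 2)) ((dstar + a) / (2 * dstar)) := by
        have hγδ : γ / δ = (dstar - a) / (2 * Dbar) := by
          have h1 : dstar ≠ 0 := hdstar.ne'
          have h2 : Dbar ≠ 0 := hDbar.ne'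
          rw [hγdef, hδdef, div_eq_div_iff (by positivity) (by positivity)]
          field_simp
        have h1 : (γ / δ) ^ 2 = (dstar - a) ^ 2 / (4 * Dbar ^ 2) := by
          rw [hγδ, div_pow]; congr 1; ring
        have h2 : 1 - γ = (dstar + a) / (2 * dstar) := by
          rw [hγdef]; field_simp; ring
        rw [h1, h2]
      rwa [heq] at h
    · exact Real.sqrt_nonneg _
  · exact fun w z γ δ => kappaL2_key w z γ δ
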